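/- arXiv:1204.5894 — 3 statements merged into one kernel-verified Lean document; each statement's English description precedes it below -/
import Mathlib

section
/- For every integer n ≥ 1, every α ∈ (0,1), and every p ∈ (0,1): ∑_{X : p < p_L(X,α)} C(n,X) p^X (1-p)^{n-X} ≤ α/2, i.e. the probability (under X ~ Binomial(n,p)) that the Clopper–Pearson lower endpoint lies strictly above the true p is at most α/2. -/
open MeasureTheory

/-- The Beta function `β(r,s) = ∫₀¹ t^(r-1) (1-t)^(s-1) dt`. -/
noncomputable def betaFun (r s : ℝ) : ℝ :=
  ∫ t in (0:ℝ)..1, t ^ (r - 1) * (1 - t) ^ (s - 1)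

/-- The Beta(r,s) density `f(t;r,s) = t^(r-1)(1-t)^(s-1)/β(r,s)`. -/
noncomputable def betaPDF (r s t : ℝ) : ℝ :=
  t ^ (r - 1) * (1 - t) ^ (s - 1) / betaFun r s

/-- The Beta(r,s) cumulative distribution function `∫₀ᵖ f(t;r,s) dt`. -/
noncomputable def betaCDF (r s p : ℝ) : ℝ :=
  ∫ t in (0:ℝ)..p, betaPDF r s t

/- The Beta quantile `B(q;r,s)`: the (unique, for `r,s>0`, `q∈(0,1)`) `t ∈ (0,1)`
with `∫₀ᵗ f(u;r,s) du = q`. -/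
open Classical in
noncomputable def betaQuantile (r s q : ℝ) : ℝ :=
  if h : ∃ t, t ∈ Set.Ioo (0:ℝ) 1 ∧ betaCDF r s t = q then h.choose else 0

/-- Lower Clopper–Pearson endpoint: `p_L(X,α) = B(α/2; X, n-X+1)` for `X ≥ 1`,
and `p_L(0,α) = 0`. -/
noncomputable def cpLower (n X : ℕ) (α : ℝ) : ℝ :=
  if X = 0 then 0 else betaQuantile (X : ℝ) ((n : ℝ) - X + 1) (α / 2)

/-- Upper Clopper–Pearson endpoint: `p_U(X,α) = B(1-α/2; X+1, n-X)` for `X ≤ n-1`,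
and `p_U(n,α) = 1`. -/
noncomputable def cpUpper (n X : ℕ) (α : ℝ) : ℝ :=
  if X = n then 1 else betaQuantile ((X : ℝ) + 1) ((n : ℝ) - X) (1 - α / 2)

/-- The binomial probability `b(X;n,p) = C(n,X) p^X (1-p)^(n-X)`. -/
noncomputable def binomPMF (n X : ℕ) (p : ℝ) : ℝ :=
  (n.choose X : ℝ) * p ^ X * (1 - p) ^ (n - X)

/-- The upper binomial tail sum. -/
noncomputable def Fsum (n k : ℕ) (p : ℝ) : ℝ :=
  ∑ j ∈ Finset.Icc k n, (n.choose j : ℝ) * p ^ j * (1 - p) ^ (n - j)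

noncomputable def Gterm (n j : ℕ) (p : ℝ) : ℝ :=
  (n.choose j : ℝ) * j * p ^ (j - 1) * (1 - p) ^ (n - j)

lemma term_hasDeriv (n j : ℕ) (p : ℝ) :
    HasDerivAt (fun p : ℝ => (n.choose j : ℝ) * p ^ j * (1 - p) ^ (n - j))
      (Gterm n j p - Gterm n (j + 1) p) p := by
  have h1 : HasDerivAt (fun p : ℝ => p ^ j) ((j : ℝ) * p ^ (j - 1)) p := by
    simpa using hasDerivAt_pow j p
  have hb : HasDerivAt (fun p : ℝ => 1 - p) (-1) p := by
    simpa using (hasDerivAt_id p).const_sub 1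
  have h2 : HasDerivAt (fun p : ℝ => (1 - p) ^ (n - j))
      (((n - j : ℕ) : ℝ) * (1 - p) ^ (n - j - 1) * (-1)) p := by
    simpa [Function.comp_def] using (hasDerivAt_pow (n - j) (1 - p)).comp p hb
  have h := (h1.const_mul ((n.choose j : ℝ))).mul h2
  refine h.congr_deriv ?_
  symm
  unfold Gterm
  rcases le_or_gt n j with hnj | hnj
  · have e1 : n - j = 0 := Nat.sub_eq_zero_of_le hnj
    have e2 : n.choose (j + 1) = 0 := Nat.choose_eq_zero_of_lt (by omega)
    simp [e1, e2]
    ring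
  · have e3 : n - j - 1 = n - (j + 1) := by omega
    have e4 : (n.choose (j + 1) : ℝ) * ((j : ℝ) + 1) = (n.choose j : ℝ) * ((n - j : ℕ) : ℝ) := by
      exact_mod_cast congrArg (Nat.cast : ℕ → ℝ) (Nat.choose_succ_right_eq n j)
    rw [e3] at *
    push_cast at e4 ⊢
    linear_combination (-(p ^ j * (1 - p) ^ (n - (j + 1)))) * e4

lemma Fsum_hasDeriv (n k : ℕ) (hkn : k ≤ n) (p : ℝ) :
    HasDerivAt (Fsum n k) (Gterm n k p) p := by
  have h : HasDerivAt (Fsum n k)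
      (∑ j ∈ Finset.Icc k n, (Gterm n j p - Gterm n (j + 1) p)) p :=
    HasDerivAt.fun_sum (fun j _ => term_hasDeriv n j p)
  convert h using 1
  have : Finset.Icc k n = Finset.Ico k (n + 1) := by
    rw [Finset.Ico_add_one_right_eq_Icc]
  rw [this, Finset.sum_Ico_eq_sum_range]
  have htel := Finset.sum_range_sub' (fun i => Gterm n (k + i) p) (n + 1 - k)
  have e1 : k + (n + 1 - k) = n + 1 := by omega
  have e2 : Gterm n (n + 1) p = 0 := by
    unfold Gterm
    simp [Nat.choose_eq_zero_of_lt (Nat.lt_succ_self n)]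
  simp only [show ∀ i, k + i + 1 = k + (i + 1) from fun i => by omega] at *
  rw [htel, e1, e2, Nat.add_zero, sub_zero]

lemma Gterm_cont (n k : ℕ) : Continuous (Gterm n k) := by
  unfold Gterm; fun_prop

lemma Fsum_eq_integral (n k : ℕ) (hk : 1 ≤ k) (hkn : k ≤ n) (p : ℝ) :
    Fsum n k p = ∫ t in (0:ℝ)..p, Gterm n k t := by
  have h := intervalIntegral.integral_eq_sub_of_hasDerivAt
    (f := Fsum n k) (f' := Gterm n k) (a := 0) (b := p)
    (fun t _ => Fsum_hasDeriv n k hkn t)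
    ((Gterm_cont n k).intervalIntegrable 0 p)
  have h0 : Fsum n k 0 = 0 := by
    unfold Fsum
    apply Finset.sum_eq_zero
    intro j hj
    have hj1 : 1 ≤ j := le_trans hk (Finset.mem_Icc.mp hj).1
    simp [zero_pow (by omega : j ≠ 0)]
  rw [h, h0, sub_zero]

lemma Fsum_one (n k : ℕ) (hkn : k ≤ n) : Fsum n k 1 = 1 := by
  unfold Fsum
  rw [Finset.sum_eq_single n]
  · simp
  · intro j hj hne
    have hlt : j < n := lt_of_le_of_ne (Finset.mem_Icc.mp hj).2 hne
    simp [zero_pow (by omega : n - j ≠ 0)]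
  · intro h
    exact absurd (Finset.mem_Icc.mpr ⟨hkn, le_refl n⟩) h

lemma betaPDF_poly (n k : ℕ) (hk : 1 ≤ k) (hkn : k ≤ n) (t : ℝ) :
    t ^ ((k : ℝ) - 1) * (1 - t) ^ (((n : ℝ) - k + 1) - 1) = t ^ (k - 1) * (1 - t) ^ (n - k) := by
  have e1 : (k : ℝ) - 1 = ((k - 1 : ℕ) : ℝ) := by
    rw [Nat.cast_sub hk, Nat.cast_one]
  have e2 : ((n : ℝ) - k + 1) - 1 = ((n - k : ℕ) : ℝ) := by
    rw [Nat.cast_sub hkn]; ring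
  rw [e1, e2, Real.rpow_natCast, Real.rpow_natCast]

lemma choose_mul_pos (n k : ℕ) (hk : 1 ≤ k) (hkn : k ≤ n) :
    0 < (n.choose k : ℝ) * k := by
  have h1 : 0 < n.choose k := Nat.choose_pos hkn
  positivity

lemma betaFun_eq (n k : ℕ) (hk : 1 ≤ k) (hkn : k ≤ n) :
    betaFun (k : ℝ) ((n : ℝ) - k + 1) = 1 / ((n.choose k : ℝ) * k) := by
  have hpoly : betaFun (k : ℝ) ((n : ℝ) - k + 1)
      = ∫ t in (0:ℝ)..1, t ^ (k - 1) * (1 - t) ^ (n - k) := by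
    unfold betaFun
    exact intervalIntegral.integral_congr (fun t _ => betaPDF_poly n k hk hkn t)
  have h1 := Fsum_eq_integral n k hk hkn 1
  rw [Fsum_one n k hkn] at h1
  have h2 : ∫ t in (0:ℝ)..1, Gterm n k t
      = ((n.choose k : ℝ) * k) * ∫ t in (0:ℝ)..1, t ^ (k - 1) * (1 - t) ^ (n - k) := by
    rw [← intervalIntegral.integral_const_mul]
    apply intervalIntegral.integral_congr
    intro t _
    unfold Gterm
    ring
  rw [h2] at h1
  have hc := choose_mul_pos n k hk hkn
  rw [hpoly]
  rw [eq_div_iff hc.ne']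
  linear_combination -h1

lemma betaCDF_eq (n k : ℕ) (hk : 1 ≤ k) (hkn : k ≤ n) (p : ℝ) :
    betaCDF (k : ℝ) ((n : ℝ) - k + 1) p = Fsum n k p := by
  have hc := choose_mul_pos n k hk hkn
  unfold betaCDF
  have : ∀ t : ℝ, betaPDF (k : ℝ) ((n : ℝ) - k + 1) t = Gterm n k t := by
    intro t
    unfold betaPDF Gterm
    rw [betaPDF_poly n k hk hkn, betaFun_eq n k hk hkn]
    field_simp
  rw [intervalIntegral.integral_congr (fun t _ => this t)]
  exact (Fsum_eq_integral n k hk hkn p).symm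

lemma betaCDF_mono (n k : ℕ) (hk : 1 ≤ k) (hkn : k ≤ n) {a b : ℝ}
    (ha : 0 ≤ a) (hab : a ≤ b) (hb : b ≤ 1) :
    betaCDF (k : ℝ) ((n : ℝ) - k + 1) a ≤ betaCDF (k : ℝ) ((n : ℝ) - k + 1) b := by
  rw [betaCDF_eq n k hk hkn, betaCDF_eq n k hk hkn,
    Fsum_eq_integral n k hk hkn, Fsum_eq_integral n k hk hkn]
  have hadd := intervalIntegral.integral_add_adjacent_intervals (μ := volume)
    ((Gterm_cont n k).intervalIntegrable 0 a) ((Gterm_cont n k).intervalIntegrable a b)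
  rw [← hadd]
  have hnn : 0 ≤ ∫ t in a..b, Gterm n k t := by
    apply intervalIntegral.integral_nonneg hab
    intro t ht
    unfold Gterm
    have ht0 : 0 ≤ t := le_trans ha ht.1
    have ht1 : (0:ℝ) ≤ 1 - t := by linarith [le_trans ht.2 hb]
    have h1 : (0:ℝ) ≤ t ^ (k - 1) := pow_nonneg ht0 _
    have h2 : (0:ℝ) ≤ (1 - t) ^ (n - k) := pow_nonneg ht1 _
    have h3 : (0:ℝ) ≤ (n.choose k : ℝ) * k := le_of_lt (choose_mul_pos n k hk hkn)
    calc (0:ℝ) ≤ ((n.choose k : ℝ) * k) * (t ^ (k - 1) * (1 - t) ^ (n - k)) :=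
          mul_nonneg h3 (mul_nonneg h1 h2)
      _ = (n.choose k : ℝ) * ↑k * t ^ (k - 1) * (1 - t) ^ (n - k) := by ring
  linarith

open Classical in
/-- The probability that the Clopper–Pearson lower endpoint lies strictly above the true `p`
is at most `α/2`. -/
theorem clopperPearson_lower_noncoverage (n : ℕ) (hn : 1 ≤ n) (α : ℝ) (hα : α ∈ Set.Ioo (0:ℝ) 1)
    (p : ℝ) (hp : p ∈ Set.Ioo (0:ℝ) 1) :
    ∑ X ∈ Finset.range (n + 1), (if p < cpLower n X α then binomPMF n X p else 0) ≤ α / 2 := by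
  obtain ⟨hp0, hp1⟩ := hp
  obtain ⟨hα0, hα1⟩ := hα
  rw [← Finset.sum_filter]
  set S := (Finset.range (n + 1)).filter (fun X => p < cpLower n X α) with hSdef
  by_cases hS : S.Nonempty
  · set k := S.min' hS with hkdef
    have hkS : k ∈ S := S.min'_mem hS
    obtain ⟨hkrange, hkp⟩ := Finset.mem_filter.mp hkS
    have hkn : k ≤ n := Nat.lt_succ_iff.mp (Finset.mem_range.mp hkrange)
    have hk0 : k ≠ 0 := by
      intro h
      rw [h] at hkp
      simp only [cpLower, if_pos rfl] at hkp
      norm_num at hkp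
      linarith
    have hk1 : 1 ≤ k := Nat.one_le_iff_ne_zero.mpr hk0
    have hcl : cpLower n k α = betaQuantile (k : ℝ) ((n : ℝ) - k + 1) (α / 2) := if_neg hk0
    rw [hcl] at hkp
    unfold betaQuantile at hkp
    split_ifs at hkp with hex
    · obtain ⟨hmem, hval⟩ := hex.choose_spec
      have hsub : S ⊆ Finset.Icc k n := by
        intro X hX
        refine Finset.mem_Icc.mpr ⟨S.min'_le X hX, ?_⟩
        have := Finset.mem_range.mp (Finset.mem_filter.mp hX).1
        omega
      have hb : ∑ X ∈ S, binomPMF n X p ≤ ∑ X ∈ Finset.Icc k n, binomPMF n X p := by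
        apply Finset.sum_le_sum_of_subset_of_nonneg hsub
        intro X _ _
        unfold binomPMF
        have h1 : (0:ℝ) ≤ 1 - p := by linarith
        positivity
      have he : ∑ X ∈ Finset.Icc k n, binomPMF n X p = Fsum n k p := rfl
      calc ∑ X ∈ S, binomPMF n X p ≤ Fsum n k p := he ▸ hb
        _ = betaCDF (k : ℝ) ((n : ℝ) - k + 1) p := (betaCDF_eq n k hk1 hkn p).symm
        _ ≤ betaCDF (k : ℝ) ((n : ℝ) - k + 1) hex.choose :=
            betaCDF_mono n k hk1 hkn (le_of_lt hp0) (le_of_lt hkp) (le_of_lt hmem.2)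
        _ = α / 2 := hval
    · linarith
  · rw [Finset.not_nonempty_iff_eq_empty.mp hS, Finset.sum_empty]
    linarith
end

section
/- Exactness of the Clopper–Pearson interval: for every integer n ≥ 1, every α ∈ (0,1), and every p ∈ (0,1), ∑_{X : p_L(X,α) ≤ p ≤ p_U(X,α)} C(n,X) p^X (1-p)^{n-X} ≥ 1 − α, i.e. the coverage probability of the level-(1-α) Clopper–Pearson interval is at least 1 − α for every p. -/
open MeasureTheory

section CPaux
open intervalIntegral MeasureTheory

private theorem ibp_aux (x d : ℕ) (hx : 1 ≤ x) (p : ℝ) :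
    (x:ℝ) * ∫ t in (0:ℝ)..p, t^(x-1) * (1-t)^(d+1)
      = p^x * (1-p)^(d+1) + (d+1) * ∫ t in (0:ℝ)..p, t^x * (1-t)^d := by
  have hu : ∀ t ∈ Set.uIcc (0:ℝ) p, HasDerivAt (fun t : ℝ => (1-t)^(d+1))
      (-((d+1) * (1-t)^d)) t := by
    intro t _
    have h1 : HasDerivAt (fun t : ℝ => 1 - t) (-1) t := by
      simpa using (hasDerivAt_id t).const_sub 1
    have := h1.fun_pow (d+1)
    simpa [mul_comm, mul_assoc, mul_left_comm] using this
  have hv : ∀ t ∈ Set.uIcc (0:ℝ) p, HasDerivAt (fun t : ℝ => t^x)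
      ((x:ℝ) * t^(x-1)) t := fun t _ => hasDerivAt_pow x t
  have hiu : IntervalIntegrable (fun t : ℝ => -((d+1) * (1-t)^d)) MeasureTheory.volume 0 p :=
    (by fun_prop : Continuous fun t : ℝ => -(((d:ℝ)+1) * (1-t)^d)).intervalIntegrable _ _
  have hiv : IntervalIntegrable (fun t : ℝ => (x:ℝ) * t^(x-1)) MeasureTheory.volume 0 p :=
    (by fun_prop : Continuous fun t : ℝ => (x:ℝ) * t^(x-1)).intervalIntegrable _ _
  have ibp := integral_mul_deriv_eq_deriv_mul hu hv hiu hiv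
  have h0 : (0:ℝ)^x = 0 := zero_pow (by omega)
  simp only [h0, mul_zero, sub_zero] at ibp
  have e1 : ∫ t in (0:ℝ)..p, (1-t)^(d+1) * ((x:ℝ) * t^(x-1))
      = (x:ℝ) * ∫ t in (0:ℝ)..p, t^(x-1) * (1-t)^(d+1) := by
    rw [← intervalIntegral.integral_const_mul]; congr 1; ext t; ring
  have e2 : ∫ t in (0:ℝ)..p, -((d+1) * (1-t)^d) * t^x
      = -((d:ℝ)+1) * ∫ t in (0:ℝ)..p, t^x * (1-t)^d := by
    rw [← intervalIntegral.integral_const_mul]; congr 1; ext t; ring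
  rw [e1, e2] at ibp
  linarith [ibp]

private theorem key (n x : ℕ) (hx1 : 1 ≤ x) (hxn : x ≤ n) (p : ℝ) :
    ∑ k ∈ Finset.Icc x n, binomPMF n k p
      = ((n * (n-1).choose (x-1) : ℕ) : ℝ) * ∫ t in (0:ℝ)..p, t^(x-1) * (1-t)^(n-x) := by
  obtain ⟨d, rfl⟩ : ∃ d, n = x + d := ⟨n - x, (Nat.add_sub_cancel' hxn).symm⟩
  clear hxn
  induction d generalizing x with
  | zero =>
    obtain ⟨j, rfl⟩ : ∃ j, x = j + 1 := ⟨x - 1, by omega⟩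
    simp only [Nat.add_zero, Finset.Icc_self, Finset.sum_singleton, binomPMF,
      Nat.choose_self, Nat.sub_self, pow_zero, Nat.add_sub_cancel, Nat.choose_self,
      integral_pow, mul_one, Nat.cast_one, one_mul]
    rw [zero_pow (by omega)]
    push_cast
    field_simp
    rw [sub_zero]
  | succ d ih =>
    obtain ⟨j, rfl⟩ : ∃ j, x = j + 1 := ⟨x - 1, by omega⟩
    have hih := ih (j+2) (by omega)
    simp only [show j+2+d = j+1+(d+1) from by omega, show j+2-1 = j+1 from rfl,
      show j+1+(d+1)-(j+2) = d from by omega] at hih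
    have hins : Finset.Icc (j+1) (j+1+(d+1)) = insert (j+1) (Finset.Icc (j+2) (j+1+(d+1))) := by
      ext k
      simp only [Finset.mem_Icc, Finset.mem_insert]
      omega
    have ibp := ibp_aux (j+1) d (by omega) p
    simp only [show j+1-1 = j from rfl] at ibp ⊢
    have hA : (j+1+(d+1)) * ((j+1+(d+1)-1).choose j) = ((j+1+(d+1)).choose (j+1)) * (j+1) := by
      have := Nat.add_one_mul_choose_eq (j+1+d) j
      simp only [show j+1+(d+1)-1 = j+1+d from by omega, show j+1+(d+1) = j+1+d+1 from by omega]
      exact this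
    have hB : (d+1) * ((j+1+(d+1)).choose (j+1)) = (j+1+(d+1)) * ((j+1+(d+1)-1).choose (j+1)) := by
      have s1 : (j+1+(d+1)).choose (j+1) = (j+1+(d+1)).choose (d+1) := by
        rw [← Nat.choose_symm (by omega)]
        congr 1
        omega
      have s2 : (j+1+(d+1)-1).choose (j+1) = (j+1+d).choose d := by
        rw [show j+1+(d+1)-1 = j+1+d from by omega, ← Nat.choose_symm (by omega)]
        congr 1
        omega
      have := Nat.add_one_mul_choose_eq (j+1+d) d
      rw [s1, s2, show j+1+(d+1) = j+1+d+1 from by omega, this]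
      ring
    rw [hins, Finset.sum_insert (by simp), hih]
    simp only [binomPMF, show j+1+(d+1)-(j+1) = d+1 from by omega]
    set A := ∫ t in (0:ℝ)..p, t^j * (1-t)^(d+1) with hAdef
    set B := ∫ t in (0:ℝ)..p, t^(j+1) * (1-t)^d with hBdef
    have ehA : ((j:ℝ)+1+(d+1)) * ((j+1+(d+1)-1).choose j : ℝ)
        = ((j+1+(d+1)).choose (j+1) : ℝ) * ((j:ℝ)+1) := by exact_mod_cast congrArg (Nat.cast (R := ℝ)) hA
    have ehB : ((d:ℝ)+1) * ((j+1+(d+1)).choose (j+1) : ℝ)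
        = ((j:ℝ)+1+(d+1)) * ((j+1+(d+1)-1).choose (j+1) : ℝ) := by exact_mod_cast congrArg (Nat.cast (R := ℝ)) hB
    push_cast
    push_cast at ibp
    linear_combination (-(((j+1+(d+1)).choose (j+1) : ℝ))) * ibp - A * ehA - B * ehB

private theorem sum_one (n : ℕ) (p : ℝ) : ∑ X ∈ Finset.range (n+1), binomPMF n X p = 1 := by
  have h := add_pow p (1-p) n
  simp only [add_sub_cancel, one_pow] at h
  rw [show ∑ X ∈ Finset.range (n+1), binomPMF n X p
      = ∑ m ∈ Finset.range (n+1), p ^ m * (1 - p) ^ (n - m) * (n.choose m : ℝ) from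
    Finset.sum_congr rfl fun k _ => by simp [binomPMF]; ring, ← h]

private theorem G_one (n x : ℕ) (hxn : x ≤ n) : ∑ k ∈ Finset.Icc x n, binomPMF n k 1 = 1 := by
  rw [Finset.sum_eq_single n]
  · simp [binomPMF]
  · intro k hk hkn
    simp only [Finset.mem_Icc] at hk
    simp [binomPMF, zero_pow (show n - k ≠ 0 by omega)]
  · simp [Finset.mem_Icc, hxn]

private theorem G_zero (n x : ℕ) (hx1 : 1 ≤ x) : ∑ k ∈ Finset.Icc x n, binomPMF n k 0 = 0 := by
  apply Finset.sum_eq_zero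
  intro k hk
  simp only [Finset.mem_Icc] at hk
  simp [binomPMF, zero_pow (show k ≠ 0 by omega)]

private theorem G_mono (n x : ℕ) (hx1 : 1 ≤ x) (hxn : x ≤ n) {a b : ℝ}
    (ha : 0 ≤ a) (hab : a ≤ b) (hb : b ≤ 1) :
    ∑ k ∈ Finset.Icc x n, binomPMF n k a ≤ ∑ k ∈ Finset.Icc x n, binomPMF n k b := by
  rw [key n x hx1 hxn a, key n x hx1 hxn b]
  have hcont : Continuous fun t : ℝ => t^(x-1) * (1-t)^(n-x) := by fun_prop
  have hsplit : (∫ t in (0:ℝ)..b, t^(x-1) * (1-t)^(n-x))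
      = (∫ t in (0:ℝ)..a, t^(x-1) * (1-t)^(n-x)) + ∫ t in a..b, t^(x-1) * (1-t)^(n-x) :=
    (integral_add_adjacent_intervals (hcont.intervalIntegrable _ _)
      (hcont.intervalIntegrable _ _)).symm
  have hpos : 0 ≤ ∫ t in a..b, t^(x-1) * (1-t)^(n-x) := by
    apply integral_nonneg hab
    intro t ht
    have h1 : 0 ≤ t := le_trans ha ht.1
    have h2 : t ≤ 1 := le_trans ht.2 hb
    exact mul_nonneg (pow_nonneg h1 _) (pow_nonneg (by linarith) _)
  rw [hsplit]
  have : (0:ℝ) ≤ ((n * (n-1).choose (x-1) : ℕ) : ℝ) := by positivity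
  nlinarith

private theorem betaCDF_eq_s11 (n x : ℕ) (hn : 1 ≤ n) (hx1 : 1 ≤ x) (hxn : x ≤ n) (u : ℝ) :
    betaCDF (x : ℝ) ((n : ℝ) - x + 1) u = ∑ k ∈ Finset.Icc x n, binomPMF n k u := by
  have hint : ∀ t : ℝ, (t : ℝ) ^ ((x:ℝ) - 1) * (1 - t) ^ ((n:ℝ) - x + 1 - 1)
      = t^(x-1 : ℕ) * (1-t)^(n-x : ℕ) := by
    intro t
    rw [show (x:ℝ) - 1 = ((x - 1 : ℕ) : ℝ) by push_cast [hx1]; ring,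
        show (n:ℝ) - x + 1 - 1 = ((n - x : ℕ) : ℝ) by push_cast [hxn]; ring,
        Real.rpow_natCast, Real.rpow_natCast]
  set c : ℝ := ((n * (n-1).choose (x-1) : ℕ) : ℝ) with hc
  have hcpos : 0 < c := by
    have : 0 < (n-1).choose (x-1) := Nat.choose_pos (by omega)
    positivity
  have hbeta : betaFun (x : ℝ) ((n : ℝ) - x + 1) = 1 / c := by
    rw [betaFun]
    rw [intervalIntegral.integral_congr (g := fun t => t^(x-1:ℕ) * (1-t)^(n-x:ℕ))
      (fun t _ => hint t)]
    have h1 := key n x hx1 hxn 1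
    rw [G_one n x hxn] at h1
    field_simp
    linarith [h1]
  rw [betaCDF]
  simp only [betaPDF, hbeta]
  rw [intervalIntegral.integral_congr
      (g := fun t => (t^(x-1:ℕ) * (1-t)^(n-x:ℕ)) * c) (fun t _ => by
        simp only [hint t]; field_simp)]
  rw [intervalIntegral.integral_mul_const, key n x hx1 hxn u]
  ring

private theorem quantile_exists (n x : ℕ) (hn : 1 ≤ n) (hx1 : 1 ≤ x) (hxn : x ≤ n) {q : ℝ}
    (hq : q ∈ Set.Ioo (0:ℝ) 1) :
    ∃ t, t ∈ Set.Ioo (0:ℝ) 1 ∧ betaCDF (x : ℝ) ((n : ℝ) - x + 1) t = q := by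
  have hcont : Continuous fun u : ℝ => ∑ k ∈ Finset.Icc x n, binomPMF n k u := by
    apply continuous_finset_sum
    intro k _
    unfold binomPMF
    fun_prop
  have : q ∈ Set.Ioo ((fun u : ℝ => ∑ k ∈ Finset.Icc x n, binomPMF n k u) 0)
      ((fun u : ℝ => ∑ k ∈ Finset.Icc x n, binomPMF n k u) 1) := by
    simp only [G_zero n x hx1, G_one n x hxn]
    exact hq
  obtain ⟨t, ht, htq⟩ := intermediate_value_Ioo (zero_le_one) hcont.continuousOn this
  exact ⟨t, ht, by rw [betaCDF_eq_s11 n x hn hx1 hxn t]; exact htq⟩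

end CPaux

open Classical in
/-- Exactness of the Clopper–Pearson interval: its coverage probability is at least `1 - α`
for every `p ∈ (0,1)`. -/
theorem clopperPearson_coverage (n : ℕ) (hn : 1 ≤ n) (α : ℝ) (hα : α ∈ Set.Ioo (0:ℝ) 1)
    (p : ℝ) (hp : p ∈ Set.Ioo (0:ℝ) 1) :
    1 - α ≤ ∑ X ∈ Finset.range (n + 1),
      (if cpLower n X α ≤ p ∧ p ≤ cpUpper n X α then binomPMF n X p else 0) := by

  obtain ⟨hp0, hp1⟩ := hp
  obtain ⟨hα0, hα1⟩ := hα
  have hb : ∀ X, 0 ≤ binomPMF n X p := by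
    intro X
    unfold binomPMF
    have : (0:ℝ) ≤ 1 - p := by linarith
    positivity
  -- bound on A
  have hA : ∑ X ∈ (Finset.range (n+1)).filter (fun X => p < cpLower n X α),
      binomPMF n X p ≤ α / 2 := by
    rcases ((Finset.range (n+1)).filter (fun X => p < cpLower n X α)).eq_empty_or_nonempty
      with h | h
    · rw [h, Finset.sum_empty]; linarith
    · obtain ⟨hX₀n, hX₀p⟩ := Finset.mem_filter.mp
        (Finset.min'_mem _ h)
      set X₀ := (((Finset.range (n+1)).filter (fun X => p < cpLower n X α)).min' h) with hX₀def
      rw [Finset.mem_range] at hX₀n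
      have hX₀1 : 1 ≤ X₀ := by
        by_contra hc
        have hz : X₀ = 0 := by omega
        rw [hz] at hX₀p
        simp [cpLower] at hX₀p
        linarith
      rw [cpLower, if_neg (by omega)] at hX₀p
      have hex := quantile_exists n X₀ hn hX₀1 (by omega) (q := α/2)
        ⟨by linarith, by linarith⟩
      rw [betaQuantile, dif_pos hex] at hX₀p
      obtain ⟨⟨ht0, ht1⟩, htq⟩ := hex.choose_spec
      calc ∑ X ∈ (Finset.range (n+1)).filter (fun X => p < cpLower n X α), binomPMF n X p
          ≤ ∑ k ∈ Finset.Icc X₀ n, binomPMF n k p := by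
            apply Finset.sum_le_sum_of_subset_of_nonneg
            · intro X hX
              have h1 := Finset.min'_le _ X hX
              have h2 := Finset.mem_range.mp (Finset.mem_filter.mp hX).1
              exact Finset.mem_Icc.mpr ⟨h1, by omega⟩
            · intro k _ _; exact hb k
        _ ≤ ∑ k ∈ Finset.Icc X₀ n, binomPMF n k hex.choose :=
            G_mono n X₀ hX₀1 (by omega) (le_of_lt hp0) (le_of_lt hX₀p) (le_of_lt ht1)
        _ = α / 2 := by rw [← betaCDF_eq_s11 n X₀ hn hX₀1 (by omega)]; exact htq
  -- bound on B
  have hB : ∑ X ∈ (Finset.range (n+1)).filter (fun X => cpUpper n X α < p),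
      binomPMF n X p ≤ α / 2 := by
    rcases ((Finset.range (n+1)).filter (fun X => cpUpper n X α < p)).eq_empty_or_nonempty
      with h | h
    · rw [h, Finset.sum_empty]; linarith
    · obtain ⟨hX₁n, hX₁p⟩ := Finset.mem_filter.mp (Finset.max'_mem _ h)
      set X₁ := (((Finset.range (n+1)).filter (fun X => cpUpper n X α < p)).max' h) with hX₁def
      rw [Finset.mem_range] at hX₁n
      have hX₁ne : X₁ ≠ n := by
        intro hc
        rw [cpUpper, if_pos hc] at hX₁p
        linarith
      rw [cpUpper, if_neg hX₁ne] at hX₁p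
      have hcast1 : ((X₁:ℝ) + 1) = (((X₁ + 1 : ℕ)):ℝ) := by push_cast; ring
      have hcast2 : ((n:ℝ) - X₁) = (n:ℝ) - ((X₁+1:ℕ):ℝ) + 1 := by push_cast; ring
      rw [hcast1, hcast2] at hX₁p
      have hex := quantile_exists n (X₁+1) hn (by omega) (by omega) (q := 1 - α/2)
        ⟨by linarith, by linarith⟩
      rw [betaQuantile, dif_pos hex] at hX₁p
      obtain ⟨⟨ht0, ht1⟩, htq⟩ := hex.choose_spec
      have hsum_split : ∑ X ∈ Finset.range (X₁+1), binomPMF n X p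
          + ∑ k ∈ Finset.Icc (X₁+1) n, binomPMF n k p = 1 := by
        rw [← sum_one n p]
        rw [Finset.range_eq_Ico,
          show Finset.Icc (X₁+1) n = Finset.Ico (X₁+1) (n+1) from by
            ext k; simp [Finset.mem_Icc, Finset.mem_Ico]]
        rw [Finset.range_eq_Ico]; exact Finset.sum_Ico_consecutive (fun X => binomPMF n X p) (m := 0) (n := X₁+1) (k := n+1) (by omega) (by omega)
      have htail : (1 : ℝ) - α/2 ≤ ∑ k ∈ Finset.Icc (X₁+1) n, binomPMF n k p := by
        have hm := G_mono n (X₁+1) (by omega) (by omega) (le_of_lt ht0)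
          (le_of_lt hX₁p) (le_of_lt hp1)
        rw [← betaCDF_eq_s11 n (X₁+1) hn (by omega) (by omega), htq] at hm
        linarith
      calc ∑ X ∈ (Finset.range (n+1)).filter (fun X => cpUpper n X α < p), binomPMF n X p
          ≤ ∑ X ∈ Finset.range (X₁+1), binomPMF n X p := by
            apply Finset.sum_le_sum_of_subset_of_nonneg
            · intro X hX
              have hle := Finset.le_max' _ X hX
              rw [Finset.mem_range]; omega
            · intro k _ _; exact hb k
        _ ≤ α / 2 := by linarith
  -- assemble
  classical
  have hsplit := Finset.sum_filter_add_sum_filter_not (Finset.range (n+1))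
    (fun X => cpLower n X α ≤ p ∧ p ≤ cpUpper n X α) (fun X => binomPMF n X p)
  have hgoal_eq : ∑ X ∈ Finset.range (n+1),
        (if cpLower n X α ≤ p ∧ p ≤ cpUpper n X α then binomPMF n X p else 0)
      = ∑ X ∈ (Finset.range (n+1)).filter
          (fun X => cpLower n X α ≤ p ∧ p ≤ cpUpper n X α), binomPMF n X p :=
    (Finset.sum_filter _ _).symm
  have hbad : ∑ X ∈ (Finset.range (n+1)).filter
      (fun X => ¬(cpLower n X α ≤ p ∧ p ≤ cpUpper n X α)), binomPMF n X p ≤ α := by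
    have hsub : (Finset.range (n+1)).filter
        (fun X => ¬(cpLower n X α ≤ p ∧ p ≤ cpUpper n X α))
        ⊆ ((Finset.range (n+1)).filter (fun X => p < cpLower n X α))
          ∪ ((Finset.range (n+1)).filter (fun X => cpUpper n X α < p)) := by
      intro X hX
      obtain ⟨hXS, hXc⟩ := Finset.mem_filter.mp hX
      rw [Finset.mem_union, Finset.mem_filter, Finset.mem_filter]
      push_neg at hXc
      rcases le_or_gt (cpLower n X α) p with hc | hc
      · exact Or.inr ⟨hXS, hXc hc⟩
      · exact Or.inl ⟨hXS, hc⟩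
    calc ∑ X ∈ (Finset.range (n+1)).filter
          (fun X => ¬(cpLower n X α ≤ p ∧ p ≤ cpUpper n X α)), binomPMF n X p
        ≤ ∑ X ∈ ((Finset.range (n+1)).filter (fun X => p < cpLower n X α))
            ∪ ((Finset.range (n+1)).filter (fun X => cpUpper n X α < p)), binomPMF n X p :=
          Finset.sum_le_sum_of_subset_of_nonneg hsub (fun k _ _ => hb k)
      _ ≤ α := by
          have hui := Finset.sum_union_inter
            (s₁ := (Finset.range (n+1)).filter (fun X => p < cpLower n X α))
            (s₂ := (Finset.range (n+1)).filter (fun X => cpUpper n X α < p))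
            (f := fun X => binomPMF n X p)
          have hnn : 0 ≤ ∑ X ∈ ((Finset.range (n+1)).filter (fun X => p < cpLower n X α))
              ∩ ((Finset.range (n+1)).filter (fun X => cpUpper n X α < p)), binomPMF n X p :=
            Finset.sum_nonneg fun k _ => hb k
          linarith
  rw [hgoal_eq]
  linarith [hsplit, hbad, sum_one n p]
end

section
/- For every integer n ≥ 1, every α ∈ (0,1), and all r, s > 0, the mean coverage of the exact level-(1-α) Clopper–Pearson interval satisfies C(α, n, r, s) ≥ 1 − α. -/
open MeasureTheory

open Classical in
/-- The mean coverage `C(α,n,r,s)` of the level-(1-α) Clopper–Pearson interval with respect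
to the Beta(r,s) density. -/
noncomputable def meanCoverage (α : ℝ) (n : ℕ) (r s : ℝ) : ℝ :=
  ∫ p in (0:ℝ)..1,
    (∑ X ∈ Finset.range (n + 1),
      (if cpLower n X α ≤ p ∧ p ≤ cpUpper n X α then binomPMF n X p else 0)) * betaPDF r s p



noncomputable def binTail (n k : ℕ) (p : ℝ) : ℝ :=
  ∑ i ∈ Finset.range (n + 1 - k), binomPMF n (k + i) p

lemma idA (n j : ℕ) (hj : 1 ≤ j) : j * n.choose j = n * (n-1).choose (j-1) := by
  rcases n with _ | m
  · rcases j with _ | l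
    · omega
    · simp [Nat.choose_eq_zero_of_lt (by omega : 0 < l + 1)]
  · rcases j with _ | l
    · omega
    · simpa [mul_comm] using (Nat.add_one_mul_choose_eq m l).symm

lemma idB (n j : ℕ) : (n - j) * n.choose j = n * (n-1).choose j := by
  have h1 : (j+1) * n.choose (j+1) = n * (n-1).choose j := idA n (j+1) (by omega)
  rw [Nat.mul_comm, ← Nat.choose_succ_right_eq, Nat.mul_comm, h1]

lemma binom_hasDeriv (n j : ℕ) (hj : 1 ≤ j) (hjn : j ≤ n) (p : ℝ) :
    HasDerivAt (fun p => binomPMF n j p)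
      ((n * (n-1).choose (j-1) : ℕ) * (p^(j-1) * (1-p)^(n-j))
        - (n * (n-1).choose j : ℕ) * (p^j * (1-p)^(n-j-1))) p := by
  have hf : HasDerivAt (fun p : ℝ => p ^ j) ((j:ℝ) * p^(j-1)) p := hasDerivAt_pow j p
  have hg0 : HasDerivAt (fun p : ℝ => 1 - p) (-1) p := by
    simpa using (hasDerivAt_id p).const_sub 1
  have hg : HasDerivAt (fun p : ℝ => (1-p) ^ (n-j))
      (((n-j : ℕ):ℝ) * (1-p)^(n-j-1) * (-1)) p :=
    (hasDerivAt_pow (n-j) (1-p)).comp p hg0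
  have h := ((hf.mul hg).const_mul ((n.choose j : ℝ)))
  have heq : (n.choose j : ℝ) * ((j:ℝ) * p^(j-1) * (1-p)^(n-j)
      + p ^ j * (((n-j:ℕ):ℝ) * (1-p)^(n-j-1) * (-1)))
      = (n * (n-1).choose (j-1) : ℕ) * (p^(j-1) * (1-p)^(n-j))
        - (n * (n-1).choose j : ℕ) * (p^j * (1-p)^(n-j-1)) := by
    have e1 : ((j:ℕ):ℝ) * (n.choose j : ℝ) = ((n * (n-1).choose (j-1) : ℕ) : ℝ) := by
      rw [← Nat.cast_mul, idA n j hj]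
    have e2 : ((n-j:ℕ):ℝ) * (n.choose j : ℝ) = ((n * (n-1).choose j : ℕ) : ℝ) := by
      rw [← Nat.cast_mul, idB n j]
    rw [← e1, ← e2]; ring
  rw [← heq]
  refine h.congr_of_eventuallyEq (Filter.Eventually.of_forall fun q => ?_)
  simp only [Pi.mul_apply]
  unfold binomPMF
  ring

lemma binTail_hasDeriv (n k : ℕ) (hk : 1 ≤ k) (hkn : k ≤ n) (p : ℝ) :
    HasDerivAt (fun p => binTail n k p)
      ((n * (n-1).choose (k-1) : ℕ) * (p^(k-1) * (1-p)^(n-k))) p := by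
  have H : ∀ j : ℕ, ℝ := fun j => (n * (n-1).choose (j-1) : ℕ) * (p^(j-1) * (1-p)^(n-j))
  set Hf : ℕ → ℝ := fun j => (n * (n-1).choose (j-1) : ℕ) * (p^(j-1) * (1-p)^(n-j)) with hH
  have hderiv : HasDerivAt (fun p => binTail n k p)
      (∑ i ∈ Finset.range (n + 1 - k), (Hf (k+i) - Hf (k+i+1))) p := by
    apply HasDerivAt.fun_sum
    intro i hi
    simp only [Finset.mem_range] at hi
    have h1 : 1 ≤ k + i := by omega
    have h2 : k + i ≤ n := by omega
    have := binom_hasDeriv n (k+i) h1 h2 p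
    simp only [hH]
    refine this.congr_deriv ?_
    rw [show k + i + 1 - 1 = k + i by omega, show n - (k + i + 1) = n - (k + i) - 1 by omega]
  have htel : (∑ i ∈ Finset.range (n + 1 - k), (Hf (k+i) - Hf (k+i+1)))
      = Hf k - Hf (k + (n+1-k)) := by
    have := Finset.sum_range_sub' (fun i => Hf (k+i)) (n+1-k)
    simpa [add_assoc] using this
  rw [htel] at hderiv
  have hz : Hf (k + (n+1-k)) = 0 := by
    have : k + (n+1-k) = n+1 := by omega
    rw [this]
    show ((n * (n-1).choose ((n+1) - 1) : ℕ) : ℝ) * _ = 0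
    rw [Nat.choose_eq_zero_of_lt (show n-1 < (n+1)-1 by omega)]
    simp
  rw [hz, sub_zero] at hderiv
  exact hderiv

lemma ftc_binTail (n k : ℕ) (hk : 1 ≤ k) (hkn : k ≤ n) (a b : ℝ) :
    ∫ t in a..b, ((n * (n-1).choose (k-1) : ℕ) : ℝ) * (t^(k-1) * (1-t)^(n-k))
      = binTail n k b - binTail n k a := by
  apply intervalIntegral.integral_eq_sub_of_hasDerivAt
  · intro x _
    exact binTail_hasDeriv n k hk hkn x
  · apply Continuous.intervalIntegrable
    continuity

lemma binTail_zero (n k : ℕ) (hk : 1 ≤ k) : binTail n k 0 = 0 := by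
  unfold binTail binomPMF
  apply Finset.sum_eq_zero
  intro i _
  rw [zero_pow (by omega)]
  ring

lemma binTail_one (n k : ℕ) (hkn : k ≤ n) : binTail n k 1 = 1 := by
  unfold binTail binomPMF
  rw [Finset.sum_eq_single (n - k)]
  · simp [Nat.add_sub_cancel' hkn]
  · intro i hi hne
    simp only [Finset.mem_range] at hi
    have h0 : (1:ℝ) - 1 = 0 := by norm_num
    rw [h0, zero_pow (by omega)]
    ring
  · intro h
    simp only [Finset.mem_range] at h
    omega

lemma c_pos (n k : ℕ) (hk : 1 ≤ k) (hkn : k ≤ n) :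
    (0:ℝ) < ((n * (n-1).choose (k-1) : ℕ) : ℝ) := by
  have : 0 < n * (n-1).choose (k-1) :=
    Nat.mul_pos (by omega) (Nat.choose_pos (by omega))
  exact_mod_cast this

lemma integrand_eq (n k : ℕ) (hk : 1 ≤ k) (hkn : k ≤ n) (t : ℝ) :
    t ^ ((k:ℝ) - 1) * (1 - t) ^ (((n:ℝ) - k + 1) - 1)
      = t ^ (k - 1 : ℕ) * (1 - t) ^ (n - k : ℕ) := by
  have e1 : (k:ℝ) - 1 = ((k - 1 : ℕ) : ℝ) := by
    rw [Nat.cast_sub hk]; norm_num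
  have e2 : ((n:ℝ) - k + 1) - 1 = ((n - k : ℕ) : ℝ) := by
    rw [Nat.cast_sub hkn]; ring
  rw [e1, e2, Real.rpow_natCast, Real.rpow_natCast]

lemma betaFun_nat (n k : ℕ) (hk : 1 ≤ k) (hkn : k ≤ n) :
    betaFun (k:ℝ) ((n:ℝ) - k + 1) = (((n * (n-1).choose (k-1) : ℕ) : ℝ))⁻¹ := by
  set c : ℝ := ((n * (n-1).choose (k-1) : ℕ) : ℝ) with hc
  have hcpos := c_pos n k hk hkn
  unfold betaFun
  have h : ∀ t : ℝ, t ^ ((k:ℝ) - 1) * (1 - t) ^ (((n:ℝ) - k + 1) - 1)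
      = c⁻¹ * (c * (t ^ (k-1:ℕ) * (1 - t) ^ (n-k:ℕ))) := by
    intro t
    rw [integrand_eq n k hk hkn]
    rw [← mul_assoc, inv_mul_cancel₀ (show c ≠ 0 from ne_of_gt hcpos), one_mul]
  simp only [h]
  rw [intervalIntegral.integral_const_mul, ftc_binTail n k hk hkn,
    binTail_zero n k hk, binTail_one n k hkn]
  simp

lemma betaCDF_nat (n k : ℕ) (hk : 1 ≤ k) (hkn : k ≤ n) (p : ℝ) :
    betaCDF (k:ℝ) ((n:ℝ) - k + 1) p = binTail n k p := by
  set c : ℝ := ((n * (n-1).choose (k-1) : ℕ) : ℝ) with hc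
  have hcpos := c_pos n k hk hkn
  unfold betaCDF betaPDF
  have h : ∀ t : ℝ, t ^ ((k:ℝ) - 1) * (1 - t) ^ (((n:ℝ) - k + 1) - 1)
        / betaFun (k:ℝ) ((n:ℝ) - k + 1)
      = c * (t ^ (k-1:ℕ) * (1 - t) ^ (n-k:ℕ)) := by
    intro t
    rw [integrand_eq n k hk hkn, betaFun_nat n k hk hkn]
    field_simp
    simp only [hc]
  simp only [h]
  rw [ftc_binTail n k hk hkn, binTail_zero n k hk, sub_zero]

lemma binTail_continuous (n k : ℕ) : Continuous (fun p => binTail n k p) := by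
  unfold binTail binomPMF
  continuity

lemma binTail_mono (n k : ℕ) (hk : 1 ≤ k) (hkn : k ≤ n) {a b : ℝ}
    (ha : 0 ≤ a) (hab : a ≤ b) (hb : b ≤ 1) : binTail n k a ≤ binTail n k b := by
  have hftc := ftc_binTail n k hk hkn a b
  have hpos : 0 ≤ ∫ t in a..b,
      ((n * (n-1).choose (k-1) : ℕ) : ℝ) * (t^(k-1) * (1-t)^(n-k)) := by
    apply intervalIntegral.integral_nonneg hab
    intro u hu
    obtain ⟨hu1, hu2⟩ := hu
    have h1 : (0:ℝ) ≤ u := le_trans ha hu1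
    have h2 : u ≤ 1 := le_trans hu2 hb
    have := c_pos n k hk hkn
    apply mul_nonneg (le_of_lt this)
    exact mul_nonneg (pow_nonneg h1 _) (pow_nonneg (by linarith) _)
  linarith

lemma quantile_spec (n k : ℕ) (hk : 1 ≤ k) (hkn : k ≤ n) (q : ℝ)
    (hq : q ∈ Set.Ioo (0:ℝ) 1) :
    betaQuantile (k:ℝ) ((n:ℝ) - k + 1) q ∈ Set.Ioo (0:ℝ) 1 ∧
      binTail n k (betaQuantile (k:ℝ) ((n:ℝ) - k + 1) q) = q := by
  have hex : ∃ t, t ∈ Set.Ioo (0:ℝ) 1 ∧ betaCDF (k:ℝ) ((n:ℝ) - k + 1) t = q := by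
    have hsub := intermediate_value_Ioo (le_of_lt one_pos)
      ((binTail_continuous n k).continuousOn (s := Set.Icc 0 1))
    rw [binTail_zero n k hk, binTail_one n k hkn] at hsub
    obtain ⟨t, ht, hft⟩ := hsub hq
    exact ⟨t, ht, by rw [betaCDF_nat n k hk hkn]; exact hft⟩
  unfold betaQuantile
  rw [dif_pos hex]
  obtain ⟨h1, h2⟩ := hex.choose_spec
  exact ⟨h1, by rw [← betaCDF_nat n k hk hkn]; exact h2⟩

lemma binomPMF_nonneg (n X : ℕ) {p : ℝ} (h0 : 0 ≤ p) (h1 : p ≤ 1) :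
    0 ≤ binomPMF n X p := by
  unfold binomPMF
  apply mul_nonneg (mul_nonneg (by positivity) (pow_nonneg h0 _))
  exact pow_nonneg (by linarith) _

lemma sum_binomPMF (n : ℕ) (p : ℝ) :
    ∑ X ∈ Finset.range (n + 1), binomPMF n X p = 1 := by
  have h := add_pow p (1 - p) n
  simp only [add_sub_cancel, one_pow] at h
  rw [h]
  apply Finset.sum_congr rfl
  intro X _
  unfold binomPMF
  ring

lemma sum_split (n k : ℕ) (hkn : k ≤ n) (f : ℕ → ℝ) :
    ∑ X ∈ Finset.range (n + 1), f X
      = (∑ X ∈ Finset.range k, f X) + ∑ i ∈ Finset.range (n + 1 - k), f (k + i) := by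
  have h := Finset.sum_range_add f k (n + 1 - k)
  rw [show k + (n + 1 - k) = n + 1 by omega] at h
  exact h

lemma bound_hi (n : ℕ) (hn : 1 ≤ n) {α p : ℝ} (hα : α ∈ Set.Ioo (0:ℝ) 1)
    (h0 : 0 ≤ p) (h1 : p ≤ 1) :
    ∑ X ∈ Finset.range (n+1), (if cpUpper n X α < p then binomPMF n X p else 0) ≤ α/2 := by
  obtain ⟨hα0, hα1⟩ := hα
  rw [← Finset.sum_filter]
  set S := (Finset.range (n+1)).filter (fun X => cpUpper n X α < p) with hS
  rcases S.eq_empty_or_nonempty with he | hne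
  · rw [he]; simp; linarith
  · set X0 := S.max' hne with hX0def
    have hX0mem : X0 ∈ S := S.max'_mem hne
    obtain ⟨hX0r', hX0U⟩ := Finset.mem_filter.mp hX0mem
    have hX0r := Finset.mem_range.mp hX0r'
    have hX0n : X0 ≠ n := by
      intro h
      rw [h] at hX0U
      unfold cpUpper at hX0U
      rw [if_pos rfl] at hX0U
      linarith
    have hkn : X0 + 1 ≤ n := by omega
    have hq : (1 - α/2) ∈ Set.Ioo (0:ℝ) 1 := ⟨by linarith, by linarith⟩
    have hspec := quantile_spec n (X0+1) (by omega) hkn (1 - α/2) hq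
    have hUeq : cpUpper n X0 α = betaQuantile ((X0+1:ℕ):ℝ) ((n:ℝ) - (X0+1:ℕ) + 1) (1 - α/2) := by
      unfold cpUpper
      rw [if_neg hX0n]
      congr 1 <;> push_cast <;> ring
    rw [hUeq] at hX0U
    obtain ⟨⟨ht0, ht1⟩, htail⟩ := hspec
    have hmono : binTail n (X0+1) (betaQuantile ((X0+1:ℕ):ℝ) ((n:ℝ) - (X0+1:ℕ) + 1) (1 - α/2))
        ≤ binTail n (X0+1) p :=
      binTail_mono n (X0+1) (by omega) hkn (le_of_lt ht0) (le_of_lt hX0U) h1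
    rw [htail] at hmono
    have hsplit := sum_split n (X0+1) hkn (fun X => binomPMF n X p)
    rw [sum_binomPMF n p] at hsplit
    have hbt : binTail n (X0+1) p
        = ∑ i ∈ Finset.range (n + 1 - (X0+1)), binomPMF n ((X0+1) + i) p := rfl
    have hhead : ∑ X ∈ Finset.range (X0+1), binomPMF n X p ≤ α/2 := by
      rw [← hbt] at hsplit
      linarith
    refine le_trans ?_ hhead
    apply Finset.sum_le_sum_of_subset_of_nonneg
    · intro X hX
      rw [Finset.mem_range]
      have : X ≤ X0 := S.le_max' X hX
      omega
    · intro X _ _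
      exact binomPMF_nonneg n X h0 h1

lemma bound_lo (n : ℕ) (hn : 1 ≤ n) {α p : ℝ} (hα : α ∈ Set.Ioo (0:ℝ) 1)
    (h0 : 0 ≤ p) (h1 : p ≤ 1) :
    ∑ X ∈ Finset.range (n+1), (if p < cpLower n X α then binomPMF n X p else 0) ≤ α/2 := by
  obtain ⟨hα0, hα1⟩ := hα
  rw [← Finset.sum_filter]
  set S := (Finset.range (n+1)).filter (fun X => p < cpLower n X α) with hS
  rcases S.eq_empty_or_nonempty with he | hne
  · rw [he]; simp; linarith
  · set X0 := S.min' hne with hX0def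
    have hX0mem : X0 ∈ S := S.min'_mem hne
    obtain ⟨hX0r', hX0L⟩ := Finset.mem_filter.mp hX0mem
    have hX0r := Finset.mem_range.mp hX0r'
    have hX00 : X0 ≠ 0 := by
      intro h
      rw [h] at hX0L
      unfold cpLower at hX0L
      rw [if_pos rfl] at hX0L
      linarith
    have hk1 : 1 ≤ X0 := by omega
    have hkn : X0 ≤ n := by omega
    have hq : α/2 ∈ Set.Ioo (0:ℝ) 1 := ⟨by linarith, by linarith⟩
    have hspec := quantile_spec n X0 hk1 hkn (α/2) hq
    have hLeq : cpLower n X0 α = betaQuantile ((X0:ℕ):ℝ) ((n:ℝ) - (X0:ℕ) + 1) (α/2) := by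
      unfold cpLower
      rw [if_neg hX00]
    rw [hLeq] at hX0L
    obtain ⟨⟨ht0, ht1⟩, htail⟩ := hspec
    have hmono : binTail n X0 p
        ≤ binTail n X0 (betaQuantile ((X0:ℕ):ℝ) ((n:ℝ) - (X0:ℕ) + 1) (α/2)) :=
      binTail_mono n X0 hk1 hkn h0 (le_of_lt hX0L) (le_of_lt ht1)
    rw [htail] at hmono
    have hbt : binTail n X0 p
        = ∑ i ∈ Finset.range (n + 1 - X0), binomPMF n (X0 + i) p := rfl
    refine le_trans ?_ hmono
    rw [hbt]
    have hsub : S ⊆ Finset.image (fun i => X0 + i) (Finset.range (n + 1 - X0)) := by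
      intro X hX
      have hle : X0 ≤ X := S.min'_le X hX
      have hXr : X < n + 1 :=
        Finset.mem_range.mp (Finset.mem_filter.mp hX).1
      rw [Finset.mem_image]
      exact ⟨X - X0, by rw [Finset.mem_range]; omega, by omega⟩
    calc ∑ X ∈ S, binomPMF n X p
        ≤ ∑ X ∈ Finset.image (fun i => X0 + i) (Finset.range (n + 1 - X0)), binomPMF n X p := by
          apply Finset.sum_le_sum_of_subset_of_nonneg hsub
          intro X _ _
          exact binomPMF_nonneg n X h0 h1
      _ = ∑ i ∈ Finset.range (n + 1 - X0), binomPMF n (X0 + i) p := by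
          rw [Finset.sum_image]
          intro a _ b _ hab
          beta_reduce at hab
          omega

lemma coverage_ge (n : ℕ) (hn : 1 ≤ n) {α p : ℝ} (hα : α ∈ Set.Ioo (0:ℝ) 1)
    (h0 : 0 ≤ p) (h1 : p ≤ 1) :
    1 - α ≤ ∑ X ∈ Finset.range (n+1),
      (if cpLower n X α ≤ p ∧ p ≤ cpUpper n X α then binomPMF n X p else 0) := by
  have key : ∀ X ∈ Finset.range (n+1), binomPMF n X p
      ≤ (if cpLower n X α ≤ p ∧ p ≤ cpUpper n X α then binomPMF n X p else 0)
        + ((if cpUpper n X α < p then binomPMF n X p else 0)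
          + (if p < cpLower n X α then binomPMF n X p else 0)) := by
    intro X _
    have hb := binomPMF_nonneg n X h0 h1
    by_cases hc : cpLower n X α ≤ p ∧ p ≤ cpUpper n X α
    · rw [if_pos hc]
      have h2 : (0:ℝ) ≤ if cpUpper n X α < p then binomPMF n X p else 0 := by
        split_ifs <;> simp [hb]
      have h3 : (0:ℝ) ≤ if p < cpLower n X α then binomPMF n X p else 0 := by
        split_ifs <;> simp [hb]
      linarith
    · rw [if_neg hc]
      rcases not_and_or.mp hc with hA | hB
      · rw [if_pos (lt_of_not_ge hA)]
        have h2 : (0:ℝ) ≤ if cpUpper n X α < p then binomPMF n X p else 0 := by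
          split_ifs <;> simp [hb]
        linarith
      · rw [if_pos (lt_of_not_ge hB)]
        have h3 : (0:ℝ) ≤ if p < cpLower n X α then binomPMF n X p else 0 := by
          split_ifs <;> simp [hb]
        linarith
  have hsum := Finset.sum_le_sum key
  rw [sum_binomPMF n p] at hsum
  rw [Finset.sum_add_distrib, Finset.sum_add_distrib] at hsum
  have hhi := bound_hi n hn hα h0 h1
  have hlo := bound_lo n hn hα h0 h1
  linarith

lemma betaIntegrable {r s : ℝ} (hr : 0 < r) (hs : 0 < s) :
    IntervalIntegrable (fun t : ℝ => t ^ (r - 1) * (1 - t) ^ (s - 1)) volume 0 1 := by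
  have hC : IntervalIntegrable (fun x : ℝ =>
      (x : ℂ) ^ ((r:ℂ) - 1) * (1 - (x : ℂ)) ^ ((s:ℂ) - 1)) volume 0 1 :=
    Complex.betaIntegral_convergent (by simpa using hr) (by simpa using hs)
  rw [intervalIntegrable_iff_integrableOn_Ioc_of_le (by norm_num : (0:ℝ) ≤ 1)] at hC ⊢
  have heq : ∀ x ∈ Set.Ioc (0:ℝ) 1,
      ((fun t : ℝ => t ^ (r - 1) * (1 - t) ^ (s - 1)) x : ℂ)
        = (x : ℂ) ^ ((r:ℂ) - 1) * (1 - (x : ℂ)) ^ ((s:ℂ) - 1) := by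
    intro x hx
    obtain ⟨hx0, hx1⟩ := hx
    rw [Complex.ofReal_mul, Complex.ofReal_cpow (le_of_lt hx0),
      Complex.ofReal_cpow (by linarith : (0:ℝ) ≤ 1 - x)]
    push_cast
    ring
  have hC' : IntegrableOn (fun x : ℝ =>
      ((x ^ (r - 1) * (1 - x) ^ (s - 1) : ℝ) : ℂ)) (Set.Ioc (0:ℝ) 1) volume := by
    apply hC.congr_fun ?_ measurableSet_Ioc
    intro x hx
    exact (heq x hx).symm
  have hre := hC'.re
  exact hre.congr (Filter.Eventually.of_forall (fun x => by simp))

lemma betaFun_pos {r s : ℝ} (hr : 0 < r) (hs : 0 < s) : 0 < betaFun r s := by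
  unfold betaFun
  apply intervalIntegral.intervalIntegral_pos_of_pos_on (betaIntegrable hr hs)
  · intro x hx
    obtain ⟨hx0, hx1⟩ := hx
    have h1 : (0:ℝ) < x ^ (r-1) := Real.rpow_pos_of_pos hx0 _
    have h2 : (0:ℝ) < (1-x) ^ (s-1) := Real.rpow_pos_of_pos (by linarith) _
    positivity
  · norm_num

lemma betaPDF_nonneg {r s : ℝ} (hr : 0 < r) (hs : 0 < s) {t : ℝ}
    (h0 : 0 ≤ t) (h1 : t ≤ 1) : 0 ≤ betaPDF r s t := by
  unfold betaPDF
  apply div_nonneg _ (le_of_lt (betaFun_pos hr hs))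
  exact mul_nonneg (Real.rpow_nonneg h0 _) (Real.rpow_nonneg (by linarith) _)

lemma betaPDF_intervalIntegrable {r s : ℝ} (hr : 0 < r) (hs : 0 < s) :
    IntervalIntegrable (fun t => betaPDF r s t) volume 0 1 := by
  unfold betaPDF
  exact (betaIntegrable hr hs).div_const _

lemma integral_betaPDF {r s : ℝ} (hr : 0 < r) (hs : 0 < s) :
    ∫ t in (0:ℝ)..1, betaPDF r s t = 1 := by
  unfold betaPDF
  rw [intervalIntegral.integral_div]
  exact div_self (ne_of_gt (betaFun_pos hr hs))

lemma betaPDF_measurable (r s : ℝ) : Measurable (fun t => betaPDF r s t) := by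
  unfold betaPDF
  apply Measurable.div_const
  have h1 : Measurable fun t : ℝ => t ^ (r - 1) := by fun_prop
  have h2 : Measurable fun t : ℝ => (1 - t) ^ (s - 1) := by fun_prop
  exact h1.mul h2

lemma cov_measurable (n : ℕ) (α : ℝ) :
    Measurable (fun p : ℝ => ∑ X ∈ Finset.range (n + 1),
      (if cpLower n X α ≤ p ∧ p ≤ cpUpper n X α then binomPMF n X p else 0)) := by
  apply Finset.measurable_sum
  intro X _
  apply Measurable.ite
  · exact measurableSet_Icc (a := cpLower n X α) (b := cpUpper n X α)
  · unfold binomPMF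
    exact (by continuity : Continuous fun p : ℝ => (n.choose X : ℝ) * p ^ X * (1-p)^(n-X)).measurable
  · exact measurable_const

lemma cov_le_one (n : ℕ) {α p : ℝ} (h0 : 0 ≤ p) (h1 : p ≤ 1) :
    ∑ X ∈ Finset.range (n + 1),
      (if cpLower n X α ≤ p ∧ p ≤ cpUpper n X α then binomPMF n X p else 0) ≤ 1 := by
  rw [← sum_binomPMF n p]
  apply Finset.sum_le_sum
  intro X _
  split_ifs
  · exact le_refl _
  · exact binomPMF_nonneg n X h0 h1

lemma cov_nonneg (n : ℕ) {α p : ℝ} (h0 : 0 ≤ p) (h1 : p ≤ 1) :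
    0 ≤ ∑ X ∈ Finset.range (n + 1),
      (if cpLower n X α ≤ p ∧ p ≤ cpUpper n X α then binomPMF n X p else 0) := by
  apply Finset.sum_nonneg
  intro X _
  split_ifs
  · exact binomPMF_nonneg n X h0 h1
  · exact le_refl _

/-- The mean coverage of the exact level-(1-α) Clopper–Pearson interval is at least `1 - α`. -/
theorem meanCoverage_ge (n : ℕ) (hn : 1 ≤ n) (α : ℝ) (hα : α ∈ Set.Ioo (0:ℝ) 1)
    (r s : ℝ) (hr : 0 < r) (hs : 0 < s) :
    1 - α ≤ meanCoverage α n r s := by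
  have hpdfInt : IntegrableOn (fun t => betaPDF r s t) (Set.Ioc (0:ℝ) 1) volume := by
    rw [← intervalIntegrable_iff_integrableOn_Ioc_of_le (by norm_num : (0:ℝ) ≤ 1)]
    exact betaPDF_intervalIntegrable hr hs
  have hint_cov : IntervalIntegrable (fun p => (∑ X ∈ Finset.range (n + 1),
      (if cpLower n X α ≤ p ∧ p ≤ cpUpper n X α then binomPMF n X p else 0))
        * betaPDF r s p) volume 0 1 := by
    rw [intervalIntegrable_iff_integrableOn_Ioc_of_le (by norm_num : (0:ℝ) ≤ 1)]
    apply Integrable.mono' hpdfInt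
    · exact ((cov_measurable n α).mul (betaPDF_measurable r s)).aestronglyMeasurable
    · rw [ae_restrict_iff' measurableSet_Ioc]
      apply Filter.Eventually.of_forall
      intro p hp
      have h0 : (0:ℝ) ≤ p := le_of_lt hp.1
      have h1 : p ≤ 1 := hp.2
      have hpdf := betaPDF_nonneg hr hs h0 h1
      have hcn := cov_nonneg n (α := α) h0 h1
      have hc1 := cov_le_one n (α := α) h0 h1
      rw [Real.norm_eq_abs, abs_of_nonneg (mul_nonneg hcn hpdf)]
      calc _ ≤ 1 * betaPDF r s p := mul_le_mul_of_nonneg_right hc1 hpdf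
        _ = betaPDF r s p := one_mul _
  have hint_c : IntervalIntegrable (fun p => (1 - α) * betaPDF r s p) volume 0 1 :=
    (betaPDF_intervalIntegrable hr hs).const_mul _
  have hmono := intervalIntegral.integral_mono_on (by norm_num : (0:ℝ) ≤ 1)
    hint_c hint_cov (fun p hp =>
      mul_le_mul_of_nonneg_right (coverage_ge n hn hα hp.1 hp.2)
        (betaPDF_nonneg hr hs hp.1 hp.2))
  rw [intervalIntegral.integral_const_mul, integral_betaPDF hr hs, mul_one] at hmono
  exact hmono
end
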